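/- Let G = (S, M_e, M_s, ρ) be a game structure and d ⊆ S. Define a : ℕ → 𝒫(S) by a(1) = d and a(n+1) = a(n) ∪ CPre_Sys(a(n)) for n ≥ 1. If a(N+1) = a(N) for some N ≥ 1, then a(N) = Attr_Sys(d). -/

import Mathlib

/-- A two-player game structure: states `S`, environment moves `Me`, system moves `Ms`,
and a transition relation such that every state has a successor and the two players'
moves uniquely determine the successor. -/
structure GameStructure (S : Type*) (Me : Type*) (Ms : Type*) where
  rel : S → Me → Ms → S → Prop
  exists_succ : ∀ s : S, ∃ (me : Me) (ms : Ms) (s' : S), rel s me ms s'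
  deterministic : ∀ (s : S) (me : Me) (ms : Ms) (s₁ s₂ : S),
    rel s me ms s₁ → rel s me ms s₂ → s₁ = s₂

variable {S Me Ms : Type*}

/-- The environment moves enabled in a state. -/
def enabledE (G : GameStructure S Me Ms) (s : S) : Set Me :=
  {me | ∃ (ms : Ms) (s' : S), G.rel s me ms s'}

/-- The system moves enabled in a state after a given environment move. -/
def enabledS (G : GameStructure S Me Ms) (s : S) (me : Me) : Set Ms :=
  {ms | ∃ s' : S, G.rel s me ms s'}

/-- A strategy for the system player: it maps a nonempty finite sequence of states,
given as the pair of its strict prefix `h = (s₀, …, s_{n-1})` and its last state `s = sₙ`,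
together with an environment move, to a system move; on enabled environment moves it
must choose an enabled system move. -/
structure SysStrategy (G : GameStructure S Me Ms) where
  act : List S → S → Me → Ms
  act_enabled : ∀ (h : List S) (s : S) (me : Me),
    me ∈ enabledE G s → act h s me ∈ enabledS G s me

/-- A strategy for the environment player: it maps a nonempty finite sequence of states,
given as the pair of its strict prefix `h = (s₀, …, s_{n-1})` and its last state `s = sₙ`,
to an enabled environment move. -/
structure EnvStrategy (G : GameStructure S Me Ms) where
  act : List S → S → Me
  act_enabled : ∀ (h : List S) (s : S), act h s ∈ enabledE G s

/-- `π` is a play consistent with the system strategy `σ`: at every step `n` there is an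
enabled environment move `me` such that the transition from `π n` under `me` and the
move chosen by `σ` on the history `(π 0, …, π n)` leads to `π (n+1)`. -/
def SysPlay (G : GameStructure S Me Ms) (σ : SysStrategy G) (π : ℕ → S) : Prop :=
  ∀ n : ℕ, ∃ me ∈ enabledE G (π n),
    G.rel (π n) me (σ.act ((List.range n).map π) (π n) me) (π (n + 1))

/-- `π` is a play consistent with the environment strategy `σ`: at every step `n` there
is a system move `ms` enabled after the environment move chosen by `σ` on the history
`(π 0, …, π n)` such that the corresponding transition leads to `π (n+1)`. -/
def EnvPlay (G : GameStructure S Me Ms) (σ : EnvStrategy G) (π : ℕ → S) : Prop :=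
  ∀ n : ℕ, ∃ ms ∈ enabledS G (π n) (σ.act ((List.range n).map π) (π n)),
    G.rel (π n) (σ.act ((List.range n).map π) (π n)) ms (π (n + 1))

/-- The system attractor of `T`: states from which the system has a strategy forcing
every consistent play to visit `T`. -/
def attrSys (G : GameStructure S Me Ms) (T : Set S) : Set S :=
  {s | ∃ σ : SysStrategy G, ∀ π : ℕ → S, π 0 = s → SysPlay G σ π → ∃ n : ℕ, π n ∈ T}

/-- The environment attractor of `T`: states from which the environment has a strategy
forcing every consistent play to visit `T`. -/
def attrEnv (G : GameStructure S Me Ms) (T : Set S) : Set S :=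
  {s | ∃ σ : EnvStrategy G, ∀ π : ℕ → S, π 0 = s → EnvPlay G σ π → ∃ n : ℕ, π n ∈ T}

/-- The controllable predecessor operator for the system player. -/
def cpreSys (G : GameStructure S Me Ms) (X : Set S) : Set S :=
  {s | ∀ me ∈ enabledE G s, ∃ ms ∈ enabledS G s me, ∀ s' : S, G.rel s me ms s' → s' ∈ X}

/-- The controllable predecessor operator for the environment player. -/
def cpreEnv (G : GameStructure S Me Ms) (X : Set S) : Set S :=
  {s | ∃ me ∈ enabledE G s, ∀ ms ∈ enabledS G s me, ∀ s' : S, G.rel s me ms s' → s' ∈ X}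

/-- A semantic acceleration lemma over a type `A`: a triple `(base, step, conc)` of
subsets such that (i) every infinite `step`-sequence starting in `conc` eventually
reaches `base`, and (ii) `conc \ base` is closed under `step`-successors. -/
def IsAccelLemma {A : Type*} (base : Set A) (step : Set (A × A)) (conc : Set A) : Prop :=
  (∀ α : ℕ → A, α 0 ∈ conc → (∀ i : ℕ, (α i, α (i + 1)) ∈ step) → ∃ k : ℕ, α k ∈ base) ∧
  (∀ a ∈ conc, a ∉ base → ∀ a' : A, (a, a') ∈ step → a' ∈ conc)

/-- Proposition 5.1 (correctness of the symbolic attractor computation, system player):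
if the iteration `a 1 = d`, `a (n+1) = a n ∪ CPre_Sys(a n)` stabilizes at step `N ≥ 1`,
then `a N` is exactly the system attractor of `d`. -/
theorem attractor_iteration_sound_sys (G : GameStructure S Me Ms) (d : Set S)
    (a : ℕ → Set S)
    (h1 : a 1 = d)
    (hstep : ∀ n : ℕ, 1 ≤ n → a (n + 1) = a n ∪ cpreSys G (a n))
    (N : ℕ) (hN : 1 ≤ N) (hfix : a (N + 1) = a N) :
    a N = attrSys G d := by
  classical
  have amono : ∀ m n : ℕ, 1 ≤ m → m ≤ n → a m ⊆ a n := by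
    intro m n hm hmn
    induction n, hmn using Nat.le_induction with
    | base => exact subset_rfl
    | succ n hmn ih =>
      rw [hstep n (hm.trans hmn)]
      exact ih.trans Set.subset_union_left
  have hd : d ⊆ a N := h1 ▸ amono 1 N le_rfl hN
  have hcl : cpreSys G (a N) ⊆ a N := by
    have h := hstep N hN
    rw [hfix] at h
    intro t ht
    rw [h]; exact Or.inr ht
  ext s
  constructor
  · intro hs
    haveI hMs : Nonempty Ms := ⟨(G.exists_succ s).choose_spec.choose⟩
    set rk : S → ℕ := fun t => sInf {n | 1 ≤ n ∧ t ∈ a n} with hrkdef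
    have hms : ∀ t me, me ∈ enabledE G t → ∃ ms, ms ∈ enabledS G t me := by
      intro t me hme
      obtain ⟨ms, s', h⟩ := hme
      exact ⟨ms, s', h⟩
    let mv : S → Me → Ms := fun t me =>
      if h : me ∈ enabledE G t ∧ t ∈ cpreSys G (a (rk t - 1)) then
        (h.2 me h.1).choose
      else if h2 : me ∈ enabledE G t then (hms t me h2).choose
      else Classical.arbitrary Ms
    have mv_enabled : ∀ t me, me ∈ enabledE G t → mv t me ∈ enabledS G t me := by
      intro t me hme
      by_cases h : me ∈ enabledE G t ∧ t ∈ cpreSys G (a (rk t - 1))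
      · simp only [mv, dif_pos h]
        exact (h.2 me h.1).choose_spec.1
      · simp only [mv, dif_neg h, dif_pos hme]
        exact (hms t me hme).choose_spec
    have mv_good : ∀ t me, me ∈ enabledE G t → t ∈ cpreSys G (a (rk t - 1)) →
        ∀ s', G.rel t me (mv t me) s' → s' ∈ a (rk t - 1) := by
      intro t me hme hc s' hrel
      have h : me ∈ enabledE G t ∧ t ∈ cpreSys G (a (rk t - 1)) := ⟨hme, hc⟩
      simp only [mv, dif_pos h] at hrel
      exact (h.2 me h.1).choose_spec.2 s' hrel
    let σ : SysStrategy G := ⟨fun _ t me => mv t me, fun _ t me hme => mv_enabled t me hme⟩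
    have hshift : ∀ π : ℕ → S, SysPlay G σ π → SysPlay G σ (fun n => π (n + 1)) := by
      intro π hp n
      obtain ⟨me, hme, hrel⟩ := hp (n + 1)
      exact ⟨me, hme, hrel⟩
    have rk_spec : ∀ (t : S) (m : ℕ), 1 ≤ m → t ∈ a m →
        1 ≤ rk t ∧ t ∈ a (rk t) ∧ rk t ≤ m := by
      intro t m hm htm
      have hne : m ∈ {n | 1 ≤ n ∧ t ∈ a n} := ⟨hm, htm⟩
      have hmem := Nat.sInf_mem (⟨m, hne⟩ : {n | 1 ≤ n ∧ t ∈ a n}.Nonempty)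
      exact ⟨hmem.1, hmem.2, Nat.sInf_le hne⟩
    have rk_cpre : ∀ t : S, 2 ≤ rk t → t ∈ a (rk t) → t ∈ cpreSys G (a (rk t - 1)) := by
      intro t h2 hta
      have hnot : t ∉ a (rk t - 1) := by
        intro hmem
        have hin : rk t - 1 ∈ {n | 1 ≤ n ∧ t ∈ a n} := ⟨by omega, hmem⟩
        have hle : rk t ≤ rk t - 1 := Nat.sInf_le hin
        omega
      have hs' := hstep (rk t - 1) (by omega)
      rw [show rk t - 1 + 1 = rk t by omega] at hs'
      rw [hs'] at hta
      exact hta.resolve_left hnot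
    have key : ∀ m : ℕ, 1 ≤ m → ∀ π : ℕ → S, SysPlay G σ π → π 0 ∈ a m →
        ∃ k, π k ∈ d := by
      intro m
      induction m using Nat.strong_induction_on with
      | _ m ih =>
        intro hm π hp h0
        obtain ⟨hr1, hrmem, hrle⟩ := rk_spec (π 0) m hm h0
        rcases eq_or_lt_of_le hr1 with h | h
        · exact ⟨0, by rw [← h1, h]; exact hrmem⟩
        · have h2 : 2 ≤ rk (π 0) := h
          have hc := rk_cpre (π 0) h2 hrmem
          obtain ⟨me, hme, hrel⟩ := hp 0
          have h1mem : π 1 ∈ a (rk (π 0) - 1) := mv_good (π 0) me hme hc (π 1) hrel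
          obtain ⟨k, hk⟩ := ih (rk (π 0) - 1) (by omega) (by omega)
            (fun n => π (n + 1)) (hshift π hp) h1mem
          exact ⟨k + 1, hk⟩
    exact ⟨σ, fun π h0 hp => key N hN π hp (by rw [h0]; exact hs)⟩
  · intro hs
    by_contra hsn
    obtain ⟨σ, hσ⟩ := hs
    have hesc : ∀ t, t ∉ a N → ∃ me, me ∈ enabledE G t ∧
        ∀ ms, ms ∈ enabledS G t me → ∀ s', G.rel t me ms s' → s' ∉ a N := by
      intro t ht
      have hnc : t ∉ cpreSys G (a N) := fun h => ht (hcl h)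
      simp only [cpreSys, Set.mem_setOf_eq] at hnc
      push_neg at hnc
      obtain ⟨me, hme, hbad⟩ := hnc
      refine ⟨me, hme, ?_⟩
      intro ms hmsE s' hrel hs'
      obtain ⟨s'', hrel'', hs''⟩ := hbad ms hmsE
      have he : s'' = s' := G.deterministic t me ms s'' s' hrel'' hrel
      rw [he] at hs''
      exact hs'' hs'
    choose me hmeE hmeBad using hesc
    have hnext : ∀ (h : List S) (t : S) (ht : t ∉ a N),
        ∃ s', G.rel t (me t ht) (σ.act h t (me t ht)) s' ∧ s' ∉ a N := by
      intro h t ht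
      obtain ⟨s', hrel⟩ := σ.act_enabled h t (me t ht) (hmeE t ht)
      exact ⟨s', hrel, hmeBad t ht _ ⟨s', hrel⟩ s' hrel⟩
    choose nxt hnxt hnxtN using hnext
    let step : List S × S → List S × S := fun q =>
      if ht : q.2 ∉ a N then (q.1 ++ [q.2], nxt q.1 q.2 ht) else (q.1 ++ [q.2], q.2)
    let p : ℕ → List S × S := fun n => step^[n] (([] : List S), s)
    let π : ℕ → S := fun n => (p n).2
    have hpsucc : ∀ n, p (n + 1) = step (p n) := by
      intro n
      simp only [p, Function.iterate_succ_apply']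
    have hout : ∀ n, π n ∉ a N := by
      intro n
      induction n with
      | zero => exact hsn
      | succ n ihn =>
        show (p (n + 1)).2 ∉ a N
        rw [hpsucc n]
        simp only [step, dif_pos (show (p n).2 ∉ a N from ihn)]
        exact hnxtN (p n).1 (p n).2 ihn
    have hhist : ∀ n, (p n).1 = (List.range n).map π := by
      intro n
      induction n with
      | zero => simp [p]
      | succ n ihn =>
        have h1' : (p (n + 1)).1 = (p n).1 ++ [(p n).2] := by
          rw [hpsucc n]
          simp only [step]
          split_ifs <;> rfl
        rw [h1', ihn, List.range_succ, List.map_append]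
        rfl
    have hplay : SysPlay G σ π := by
      intro n
      refine ⟨me (π n) (hout n), hmeE _ _, ?_⟩
      have hp1 : π (n + 1) = nxt (p n).1 (π n) (hout n) := by
        show (p (n + 1)).2 = _
        rw [hpsucc n]
        simp only [step, dif_pos (show (p n).2 ∉ a N from hout n)]; rfl
      rw [hp1, ← hhist n]
      exact hnxt (p n).1 (π n) (hout n)
    obtain ⟨k, hk⟩ := hσ π rfl hplay
    exact hout k (hd hk)
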